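/- Define h(t,x) = (1/(2γ)) (Aμ - pr)'Q(Aμ - pr)(T-t) - (1/γ)(Aμ - pr)'QA [x(T-t) + rp(T-t)²/2] + (1/(2γ)) [x'A'QAx(T-t) + (2x'A'QArp + Tr(σ'A'QAσ))(T-t)²/2 + r²p'A'QAp(T-t)³/3], with Q = (σσ')^{-1}. Then h solves the linear parabolic PDE 0 = ∂_t h + (1/2)Tr(σσ' ∇_{xx} h) + r p'∇_x h + (1/(2γ))(A(μ - x) - pr)'Q(A(μ - x) - pr) on [0,T]×ℝ^N with terminal condition h(T,x) = 0. -/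

import Mathlib

open Matrix Set

lemma upd_eq {n : ℕ} (x : Fin n → ℝ) (i : Fin n) (s : ℝ) :
    Function.update x i s = x + (s - x i) • (Pi.single i 1 : Fin n → ℝ) := by
  ext j
  rcases eq_or_ne j i with hj | hj
  · subst hj; simp
  · simp [Function.update_of_ne hj, Pi.single_eq_of_ne hj]

lemma hasDerivAt_dot {n : ℕ} (w x : Fin n → ℝ) (i : Fin n) :
    HasDerivAt (fun s => w ⬝ᵥ Function.update x i s) (w i) (x i) := by
  have hfun : (fun s => w ⬝ᵥ Function.update x i s)
      = fun s => w ⬝ᵥ x + (s - x i) * w i := by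
    funext s
    rw [upd_eq, dotProduct_add, dotProduct_smul, dotProduct_single, smul_eq_mul]
    ring
  rw [hfun]
  simpa using (((hasDerivAt_id (x i)).sub_const (x i)).mul_const (w i)).const_add (w ⬝ᵥ x)

lemma hasDerivAt_quad {n : ℕ} (M : Matrix (Fin n) (Fin n) ℝ) (x : Fin n → ℝ) (i : Fin n) :
    HasDerivAt (fun s => Function.update x i s ⬝ᵥ M.mulVec (Function.update x i s))
      (M.mulVec x i + Mᵀ.mulVec x i) (x i) := by
  have e2 : x ⬝ᵥ M.mulVec (Pi.single i 1) = Mᵀ.mulVec x i := by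
    rw [dotProduct_mulVec, dotProduct_single, mulVec_transpose, mul_one]
  have e1 : (Pi.single i 1 : Fin n → ℝ) ⬝ᵥ M.mulVec x = M.mulVec x i := by
    rw [single_dotProduct, one_mul]
  have e3 : (Pi.single i 1 : Fin n → ℝ) ⬝ᵥ M.mulVec (Pi.single i 1) = M i i := by
    rw [single_dotProduct, one_mul]
    simp [mulVec, dotProduct_single]
  have hfun : (fun s => Function.update x i s ⬝ᵥ M.mulVec (Function.update x i s))
      = fun s => x ⬝ᵥ M.mulVec x + (s - x i) * (M.mulVec x i + Mᵀ.mulVec x i)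
          + (s - x i) ^ 2 * M i i := by
    funext s
    rw [upd_eq, mulVec_add, mulVec_smul, dotProduct_add, add_dotProduct, add_dotProduct,
      dotProduct_smul, dotProduct_smul, smul_dotProduct, smul_dotProduct, e1, e2, e3,
      smul_eq_mul, smul_eq_mul, smul_eq_mul, smul_eq_mul]
    ring
  rw [hfun]
  have h1 : HasDerivAt (fun s : ℝ => s - x i) 1 (x i) := (hasDerivAt_id (x i)).sub_const (x i)
  have := ((h1.mul_const (M.mulVec x i + Mᵀ.mulVec x i)).const_add (x ⬝ᵥ M.mulVec x)).add
    ((h1.pow 2).mul_const (M i i))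
  simp at this; exact this

lemma dot_mulVec_symm {n : ℕ} (Nm : Matrix (Fin n) (Fin n) ℝ) (hs : Nmᵀ = Nm)
    (u w : Fin n → ℝ) : u ⬝ᵥ Nm.mulVec w = w ⬝ᵥ Nm.mulVec u := by
  rw [dotProduct_mulVec, ← mulVec_transpose, hs, dotProduct_comm]

lemma mulVec_dot {n : ℕ} (B : Matrix (Fin n) (Fin n) ℝ) (x u : Fin n → ℝ) :
    B.mulVec x ⬝ᵥ u = x ⬝ᵥ Bᵀ.mulVec u := by
  rw [dotProduct_comm, dotProduct_mulVec, ← mulVec_transpose, dotProduct_comm]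
/-- the explicit function `h` solves the linear parabolic PDE
`0 = ∂_t h + (1/2)Tr(σσ' ∇_{xx}h) + r p'∇_x h + (1/(2γ))(A(μ-x)-pr)'Q(A(μ-x)-pr)`
on `[0,T] × ℝ^N` with `h(T,·) = 0`, where `Q = (σσ')⁻¹`. The spatial gradient and Hessian
are expressed through iterated partial derivatives (`deriv` along coordinate updates). -/
theorem stmt_13 (N m : ℕ) (T r γ : ℝ) (hT : 0 < T) (hγ : 0 < γ) (hr : 0 < r)
    (A : Matrix (Fin N) (Fin N) ℝ) (σm : Matrix (Fin N) (Fin m) ℝ)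
    (hinv : IsUnit (σm * σmᵀ).det)
    (μ p : Fin N → ℝ)
    (Q : Matrix (Fin N) (Fin N) ℝ) (hQ : Q = (σm * σmᵀ)⁻¹)
    (v : Fin N → ℝ) (hv : v = A.mulVec μ - r • p)
    (M : Matrix (Fin N) (Fin N) ℝ) (hM : M = Aᵀ * Q * A)
    (h : ℝ → (Fin N → ℝ) → ℝ)
    (hh : ∀ t x, h t x =
      (1 / (2 * γ)) * (v ⬝ᵥ Q.mulVec v) * (T - t)
        - (1 / γ) * (v ⬝ᵥ (Q * A).mulVec ((T - t) • x + (r * (T - t) ^ 2 / 2) • p))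
        + (1 / (2 * γ)) * ((x ⬝ᵥ M.mulVec x) * (T - t)
            + (2 * (x ⬝ᵥ M.mulVec (r • p)) + (σmᵀ * M * σm).trace) * (T - t) ^ 2 / 2
            + r ^ 2 * (p ⬝ᵥ M.mulVec p) * (T - t) ^ 3 / 3))
    (gradh : ℝ → (Fin N → ℝ) → Fin N → ℝ)
    (hgrad : ∀ t x i, gradh t x i = deriv (fun s => h t (Function.update x i s)) (x i))
    (Hessh : ℝ → (Fin N → ℝ) → Fin N → Fin N → ℝ)
    (hHess : ∀ t x i j, Hessh t x i j = deriv (fun s => gradh t (Function.update x j s) i) (x j)) :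
    (∀ x, h T x = 0) ∧
      ∀ t ∈ Icc (0 : ℝ) T, ∀ x : Fin N → ℝ,
        0 = deriv (fun τ => h τ x) t
          + (1 / 2) * ∑ i, ∑ j, (σm * σmᵀ) i j * Hessh t x j i
          + r * ∑ i, p i * gradh t x i
          + (1 / (2 * γ)) *
              ((A.mulVec (μ - x) - r • p) ⬝ᵥ Q.mulVec (A.mulVec (μ - x) - r • p)) := by

  constructor
  · intro x
    rw [hh]
    norm_num
  · intro t ht x
    have hQs : Qᵀ = Q := by
      rw [hQ, transpose_nonsing_inv, transpose_mul, transpose_transpose]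
    have hMs : Mᵀ = M := by
      rw [hM, transpose_mul, transpose_mul, transpose_transpose, hQs, Matrix.mul_assoc]
    -- closed form for the gradient
    have hgrad' : ∀ (y : Fin N → ℝ) (i : Fin N), gradh t y i =
        -(1/γ)*(T-t)*(v ᵥ* (Q*A)) i
        + (1/(2*γ))*(T-t)*(M.mulVec y i + Mᵀ.mulVec y i)
        + (1/(2*γ))*r*(T-t)^2*(M.mulVec p) i := by
      intro y i
      rw [hgrad]
      have hfun : (fun s => h t (Function.update y i s)) = fun s =>
          ((1 / (2*γ)) * (v ⬝ᵥ Q.mulVec v) * (T-t)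
            - (1/γ) * ((r*(T-t)^2/2) * (v ⬝ᵥ (Q*A).mulVec p))
            + (1/(2*γ)) * (((σmᵀ * M * σm).trace) * (T-t)^2/2
                + r^2 * (p ⬝ᵥ M.mulVec p) * (T-t)^3/3)
            + (-(1/γ)*(T-t)) * ((v ᵥ* (Q*A)) ⬝ᵥ Function.update y i s))
          + ((1/(2*γ))*(T-t)) * (Function.update y i s ⬝ᵥ M.mulVec (Function.update y i s))
          + ((1/(2*γ))*r*(T-t)^2) * ((M.mulVec p) ⬝ᵥ Function.update y i s) := by
        funext s
        rw [hh, mulVec_add, mulVec_smul, mulVec_smul, dotProduct_add, dotProduct_smul,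
          dotProduct_smul, dotProduct_mulVec v (Q*A) (Function.update y i s),
          mulVec_smul M r p, dotProduct_smul,
          dotProduct_comm (Function.update y i s) (M.mulVec p)]
        simp only [smul_eq_mul]
        ring
      rw [hfun]
      have d1 := ((hasDerivAt_dot (v ᵥ* (Q*A)) y i).const_mul (-(1/γ)*(T-t))).const_add
          ((1 / (2*γ)) * (v ⬝ᵥ Q.mulVec v) * (T-t)
            - (1/γ) * ((r*(T-t)^2/2) * (v ⬝ᵥ (Q*A).mulVec p))
            + (1/(2*γ)) * (((σmᵀ * M * σm).trace) * (T-t)^2/2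
                + r^2 * (p ⬝ᵥ M.mulVec p) * (T-t)^3/3))
      have d2 := (hasDerivAt_quad M y i).const_mul ((1/(2*γ))*(T-t))
      have d3 := (hasDerivAt_dot (M.mulVec p) y i).const_mul ((1/(2*γ))*r*(T-t)^2)
      have D := (d1.add d2).add d3
      exact D.deriv
    -- closed form for the Hessian
    have hHess' : ∀ i j, Hessh t x i j = (1/(2*γ))*(T-t)*(M i j + Mᵀ i j) := by
      intro i j
      rw [hHess]
      have hfun : (fun s => gradh t (Function.update x j s) i) = fun s =>
          (-(1/γ)*(T-t)*(v ᵥ* (Q*A)) i + (1/(2*γ))*r*(T-t)^2*(M.mulVec p) i)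
          + ((1/(2*γ))*(T-t)) * (M i ⬝ᵥ Function.update x j s
              + Mᵀ i ⬝ᵥ Function.update x j s) := by
        funext s
        rw [hgrad' (Function.update x j s) i]
        have e1 : M.mulVec (Function.update x j s) i = M i ⬝ᵥ Function.update x j s := rfl
        have e2 : Mᵀ.mulVec (Function.update x j s) i = Mᵀ i ⬝ᵥ Function.update x j s := rfl
        rw [e1, e2]
        ring
      rw [hfun]
      have D := (((hasDerivAt_dot (M i) x j).add (hasDerivAt_dot (Mᵀ i) x j)).const_mul
          ((1/(2*γ))*(T-t))).const_add
          (-(1/γ)*(T-t)*(v ᵥ* (Q*A)) i + (1/(2*γ))*r*(T-t)^2*(M.mulVec p) i)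
      exact D.deriv
    -- time derivative
    have ht1 : HasDerivAt (fun τ : ℝ => T - τ) (-1) t := by
      simpa using (hasDerivAt_id t).const_sub T
    have hfun_t : (fun τ => h τ x) = fun τ =>
        ((1/(2*γ))*(v ⬝ᵥ Q.mulVec v) - (1/γ)*(v ⬝ᵥ (Q*A).mulVec x)
            + (1/(2*γ))*(x ⬝ᵥ M.mulVec x)) * (T - τ)
        + (-(1/γ)*(r/2)*(v ⬝ᵥ (Q*A).mulVec p)
            + (1/(2*γ))*(2*r*(x ⬝ᵥ M.mulVec p) + (σmᵀ*M*σm).trace)/2) * (T - τ)^2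
        + ((1/(2*γ))*r^2*(p ⬝ᵥ M.mulVec p)/3) * (T - τ)^3 := by
      funext τ
      rw [hh, mulVec_add, mulVec_smul, mulVec_smul, dotProduct_add, dotProduct_smul,
        dotProduct_smul, mulVec_smul M r p, dotProduct_smul]
      simp only [smul_eq_mul]
      ring
    have hdt : deriv (fun τ => h τ x) t =
        -((1/(2*γ))*(v ⬝ᵥ Q.mulVec v) - (1/γ)*(v ⬝ᵥ (Q*A).mulVec x)
            + (1/(2*γ))*(x ⬝ᵥ M.mulVec x))
        - 2*(-(1/γ)*(r/2)*(v ⬝ᵥ (Q*A).mulVec p)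
            + (1/(2*γ))*(2*r*(x ⬝ᵥ M.mulVec p) + (σmᵀ*M*σm).trace)/2)*(T-t)
        - 3*((1/(2*γ))*r^2*(p ⬝ᵥ M.mulVec p)/3)*(T-t)^2 := by
      rw [hfun_t]
      have D := ((HasDerivAt.const_mul
            ((1/(2*γ))*(v ⬝ᵥ Q.mulVec v) - (1/γ)*(v ⬝ᵥ (Q*A).mulVec x)
              + (1/(2*γ))*(x ⬝ᵥ M.mulVec x)) ht1).add
          (HasDerivAt.const_mul
            (-(1/γ)*(r/2)*(v ⬝ᵥ (Q*A).mulVec p)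
              + (1/(2*γ))*(2*r*(x ⬝ᵥ M.mulVec p) + (σmᵀ*M*σm).trace)/2) (ht1.pow 2))).add
          (HasDerivAt.const_mul ((1/(2*γ))*r^2*(p ⬝ᵥ M.mulVec p)/3) (ht1.pow 3))
      refine D.deriv.trans ?_
      push_cast
      ring
    -- Hessian sum
    have hs1 : ∑ i, ∑ j, (σm * σmᵀ) i j * Hessh t x j i
        = (1/γ)*(T-t)*((σm*σmᵀ)*M).trace := by
      have htr : ((σm*σmᵀ)*M).trace = ∑ i, ∑ j, (σm*σmᵀ) i j * M j i := by
        simp [Matrix.trace, Matrix.mul_apply, Matrix.diag]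
      rw [htr, Finset.mul_sum]
      refine Finset.sum_congr rfl fun i _ => ?_
      rw [Finset.mul_sum]
      refine Finset.sum_congr rfl fun j _ => ?_
      rw [hHess' j i, hMs]
      ring
    -- gradient sum
    have e0 : ∑ i, p i * (v ᵥ* (Q*A)) i = v ⬝ᵥ (Q*A).mulVec p := by
      rw [dotProduct_mulVec, dotProduct_comm]
      rfl
    have e1 : ∑ i, p i * M.mulVec x i = x ⬝ᵥ M.mulVec p := dot_mulVec_symm M hMs p x
    have e2 : ∑ i, p i * Mᵀ.mulVec x i = x ⬝ᵥ M.mulVec p := by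
      have : p ⬝ᵥ Mᵀ.mulVec x = x ⬝ᵥ M.mulVec p := by
        rw [hMs]; exact dot_mulVec_symm M hMs p x
      exact this
    have e3 : ∑ i, p i * M.mulVec p i = p ⬝ᵥ M.mulVec p := rfl
    have hs2 : ∑ i, p i * gradh t x i =
        -(1/γ)*(T-t)*(v ⬝ᵥ (Q*A).mulVec p)
        + (1/(2*γ))*(T-t)*(2*(x ⬝ᵥ M.mulVec p))
        + (1/(2*γ))*r*(T-t)^2*(p ⬝ᵥ M.mulVec p) := by
      have step : ∑ i, p i * gradh t x i =
          ∑ i, ((-(1/γ)*(T-t)) * (p i * (v ᵥ* (Q*A)) i)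
            + ((1/(2*γ))*(T-t)) * (p i * M.mulVec x i)
            + ((1/(2*γ))*(T-t)) * (p i * Mᵀ.mulVec x i)
            + ((1/(2*γ))*r*(T-t)^2) * (p i * M.mulVec p i)) := by
        refine Finset.sum_congr rfl fun i _ => ?_
        rw [hgrad' x i]
        ring
      rw [step, Finset.sum_add_distrib, Finset.sum_add_distrib, Finset.sum_add_distrib,
        ← Finset.mul_sum, ← Finset.mul_sum, ← Finset.mul_sum, ← Finset.mul_sum]
      rw [e0, e1, e2, e3]
      ring
    -- the quadratic term
    have hw : A.mulVec (μ - x) - r • p = v - A.mulVec x := by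
      funext i
      rw [hv]
      simp [mulVec_sub, Pi.sub_apply, Pi.smul_apply, smul_eq_mul]
      ring
    have hwQ : (v - A.mulVec x) ⬝ᵥ Q.mulVec (v - A.mulVec x)
        = v ⬝ᵥ Q.mulVec v - 2*(v ⬝ᵥ (Q*A).mulVec x) + x ⬝ᵥ M.mulVec x := by
      rw [mulVec_sub, sub_dotProduct, dotProduct_sub, dotProduct_sub]
      have f5 : v ⬝ᵥ Q.mulVec (A.mulVec x) = v ⬝ᵥ (Q*A).mulVec x := by
        rw [mulVec_mulVec]
      have f6 : (A.mulVec x) ⬝ᵥ Q.mulVec v = v ⬝ᵥ (Q*A).mulVec x := by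
        rw [dot_mulVec_symm Q hQs, mulVec_mulVec]
      have f7 : (A.mulVec x) ⬝ᵥ Q.mulVec (A.mulVec x) = x ⬝ᵥ M.mulVec x := by
        rw [mulVec_dot, mulVec_mulVec, mulVec_mulVec, ← hM]
      rw [f5, f6, f7]
      ring
    have htr2 : (σmᵀ*M*σm).trace = ((σm*σmᵀ)*M).trace := by
      rw [Matrix.trace_mul_cycle]
    rw [hdt, hs1, hs2, hw, hwQ, htr2]
    ring
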